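/- Let ψ : ℝ → ℂ be a Schwartz function. Then there is a constant C > 0, depending only on ψ, such that for every sequence α : ℤ → ℂ of at most polynomial growth (i.e. there exist C₀ > 0 and d ≥ 0 with |α_n| ≤ C₀ ⟨n⟩^d for all n ∈ ℤ), every p ∈ ℤ and every τ ∈ ℝ, one has |∑_{n∈ℤ} conj(α_n) · conj(α_{-n-p}) · ψ̂(τ - n² - (n+p)²)|² ≤ C ∑_{n∈ℤ} |α_n|² |α_{-n-p}|² |ψ̂(τ - n² - (n+p)²)|. -/

import Mathlib

/-- The Japanese bracket `⟨x⟩ = (1 + x²)^{1/2}`. -/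
noncomputable def jb (x : ℝ) : ℝ := Real.sqrt (1 + x ^ 2)

/-- The time-Fourier transform `ψ̂(τ) = ∫_ℝ e^{-iτt} ψ(t) dt`. -/
noncomputable def ft (ψ : ℝ → ℂ) (τ : ℝ) : ℂ :=
  ∫ t : ℝ, Complex.exp (-Complex.I * (τ : ℂ) * (t : ℂ)) * ψ t

open Real FourierTransform

lemma ft_eq_fourierIntegral (ψ : SchwartzMap ℝ ℂ) (τ : ℝ) :
    ft (⇑ψ) τ = 𝓕 (⇑ψ) (τ / (2 * Real.pi)) := by
  rw [Real.fourier_real_eq_integral_exp_smul]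
  unfold ft
  congr 1
  ext t
  rw [smul_eq_mul]
  congr 1
  have hπ : (2 * Real.pi) ≠ 0 := by positivity
  have h : ((-2 : ℝ) * π * t * (τ / (2 * π))) = -(τ * t) := by field_simp
  rw [h]
  push_cast
  ring

lemma ft_decay (ψ : SchwartzMap ℝ ℂ) (k : ℕ) :
    ∃ K : ℝ, 0 < K ∧ ∀ τ : ℝ, ‖ft (⇑ψ) τ‖ ≤ K / (1 + τ ^ 2) ^ k := by
  set φ := SchwartzMap.fourierTransformCLM ℂ ψ with hφ
  obtain ⟨C₀, hC₀pos, hC₀⟩ := φ.decay 0 0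
  obtain ⟨C₂, hC₂pos, hC₂⟩ := φ.decay (2 * k) 0
  have hφdecay : ∀ x : ℝ, ‖φ x‖ ≤ 2 ^ k * (C₀ + C₂) / (1 + x ^ 2) ^ k := by
    intro x
    have h0 := hC₀ x
    have h2 := hC₂ x
    rw [norm_iteratedFDeriv_zero] at h0 h2
    simp only [pow_zero, one_mul] at h0
    have hx : ‖x‖ ^ (2 * k) = (x ^ 2) ^ k := by
      rw [Real.norm_eq_abs, ← abs_pow, pow_mul, abs_of_nonneg (by positivity)]
    rw [hx] at h2
    have hpos : (0:ℝ) < (1 + x ^ 2) ^ k := by positivity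
    rw [le_div_iff₀ hpos]
    have hkey : (1 + x ^ 2) ^ k ≤ 2 ^ k * (1 + (x ^ 2) ^ k) := by
      calc (1 + x ^ 2) ^ k ≤ (2 * max 1 (x ^ 2)) ^ k := by
            apply pow_le_pow_left₀ (by positivity)
            rcases le_total (x ^ 2) 1 with h | h
            · rw [max_eq_left h]; linarith
            · rw [max_eq_right h]; linarith
        _ = 2 ^ k * max 1 (x ^ 2) ^ k := by rw [mul_pow]
        _ ≤ 2 ^ k * (1 + (x ^ 2) ^ k) := by
            apply mul_le_mul_of_nonneg_left _ (by positivity)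
            rcases le_total (x ^ 2) 1 with h | h
            · rw [max_eq_left h, one_pow]; linarith [pow_nonneg (sq_nonneg x) k]
            · rw [max_eq_right h]
              have : (1:ℝ) ≥ 0 := by norm_num
              nlinarith [pow_nonneg (sq_nonneg x) k]
    calc ‖φ x‖ * (1 + x ^ 2) ^ k ≤ ‖φ x‖ * (2 ^ k * (1 + (x ^ 2) ^ k)) := by
          apply mul_le_mul_of_nonneg_left hkey (norm_nonneg _)
      _ = 2 ^ k * (‖φ x‖ + (x ^ 2) ^ k * ‖φ x‖) := by ring
      _ ≤ 2 ^ k * (C₀ + C₂) := mul_le_mul_of_nonneg_left (add_le_add h0 h2) (by positivity)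
  refine ⟨2 ^ k * (C₀ + C₂) * ((2 * π) ^ 2) ^ k, by positivity, fun τ => ?_⟩
  have h1 : ft (⇑ψ) τ = φ (τ / (2 * π)) := by
    rw [ft_eq_fourierIntegral, hφ, SchwartzMap.fourierTransformCLM_apply, SchwartzMap.fourier_coe]
  rw [h1]
  have h2 := hφdecay (τ / (2 * π))
  have hπ : (0:ℝ) < 2 * π := by positivity
  have hbase : (1 + τ ^ 2) ≤ (2 * π) ^ 2 * (1 + (τ / (2 * π)) ^ 2) := by
    have hpi : (1:ℝ) ≤ (2 * π) ^ 2 := by nlinarith [Real.pi_gt_three]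
    have : (2 * π) ^ 2 * (τ / (2 * π)) ^ 2 = τ ^ 2 := by field_simp
    nlinarith
  calc ‖φ (τ / (2 * π))‖ ≤ 2 ^ k * (C₀ + C₂) / (1 + (τ / (2 * π)) ^ 2) ^ k := h2
    _ ≤ 2 ^ k * (C₀ + C₂) * ((2 * π) ^ 2) ^ k / (1 + τ ^ 2) ^ k := by
        rw [div_le_div_iff₀ (by positivity) (by positivity)]
        have h3 : (1 + τ ^ 2) ^ k ≤ ((2 * π) ^ 2) ^ k * (1 + (τ / (2 * π)) ^ 2) ^ k := by
          rw [← mul_pow]; exact pow_le_pow_left₀ (by positivity) hbase k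
        have hCC : (0:ℝ) ≤ 2 ^ k * (C₀ + C₂) := by
          apply mul_le_mul_of_nonneg_left (le_of_lt (by linarith : (0:ℝ) < C₀ + C₂)) (by positivity) |>.trans_eq' (by ring)
        calc 2 ^ k * (C₀ + C₂) * (1 + τ ^ 2) ^ k
            ≤ 2 ^ k * (C₀ + C₂) * (((2 * π) ^ 2) ^ k * (1 + (τ / (2 * π)) ^ 2) ^ k) :=
              mul_le_mul_of_nonneg_left h3 hCC
          _ = 2 ^ k * (C₀ + C₂) * ((2 * π) ^ 2) ^ k * (1 + (τ / (2 * π)) ^ 2) ^ k := by ring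

lemma summable_base : Summable (fun n : ℤ => ((1:ℝ) + (n:ℝ) ^ 2)⁻¹) := by
  have hnat : Summable (fun n : ℕ => ((1:ℝ) + (n:ℝ) ^ 2)⁻¹) := by
    have h1 : Summable (fun n : ℕ => 1 / ((n:ℝ) + 1) ^ 2) := by
      have h := (summable_nat_add_iff (f := fun n : ℕ => 1 / (n:ℝ) ^ 2) 1).2
        (Real.summable_one_div_nat_pow.2 one_lt_two)
      refine h.congr fun n => ?_
      push_cast
      ring
    apply Summable.of_nonneg_of_le (fun n => by positivity) (fun n => ?_) (h1.mul_left 2)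
    have hpos : (0:ℝ) < 1 + (n:ℝ) ^ 2 := by positivity
    have h3 : (0:ℝ) < ((n:ℝ) + 1) ^ 2 := by positivity
    rw [show (2:ℝ) * (1 / ((n:ℝ) + 1) ^ 2) = 2 / ((n:ℝ) + 1) ^ 2 by ring,
      inv_eq_one_div, div_le_div_iff₀ hpos h3]
    nlinarith [sq_nonneg ((n:ℝ) - 1)]
  apply Summable.of_nat_of_neg
  · exact hnat.congr fun n => by push_cast; ring
  · exact hnat.congr fun n => by push_cast; ring


lemma translate_bound : ∃ Cw : ℝ, 0 < Cw ∧ ∀ τ : ℝ,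
    Summable (fun k : ℤ => ((1:ℝ) + (τ - (k:ℝ)) ^ 2)⁻¹) ∧
    (∑' k : ℤ, ((1:ℝ) + (τ - (k:ℝ)) ^ 2)⁻¹) ≤ Cw := by
  set Z := ∑' n : ℤ, ((1:ℝ) + (n:ℝ) ^ 2)⁻¹ with hZ
  have hZpos : 0 < Z := by
    have h1 : ((1:ℝ) + ((0:ℤ):ℝ) ^ 2)⁻¹ ≤ Z :=
      Summable.le_tsum summable_base 0 (fun j _ => by positivity)
    simp at h1
    linarith
  refine ⟨4 * Z, by linarith, fun τ => ?_⟩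
  set m : ℤ := round τ with hm
  have hshift : Summable (fun k : ℤ => ((1:ℝ) + ((k:ℝ) - (m:ℝ)) ^ 2)⁻¹) := by
    have := summable_base.comp_injective (Equiv.subRight m).injective
    refine this.congr fun k => ?_
    simp [Equiv.subRight]
  have hkey : ∀ k : ℤ, ((1:ℝ) + (τ - (k:ℝ)) ^ 2)⁻¹ ≤ 4 * ((1:ℝ) + ((k:ℝ) - (m:ℝ)) ^ 2)⁻¹ := by
    intro k
    have hr : |τ - (m:ℝ)| ≤ 1 / 2 := abs_sub_round τ
    have hr2 : (τ - (m:ℝ)) ^ 2 ≤ 1 / 4 := by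
      rw [← sq_abs]; nlinarith [abs_nonneg (τ - (m:ℝ))]
    have h4 : 1 + ((k:ℝ) - (m:ℝ)) ^ 2 ≤ 4 * (1 + (τ - (k:ℝ)) ^ 2) := by
      nlinarith [sq_nonneg ((τ - (k:ℝ)) + (τ - (m:ℝ))), sq_nonneg ((τ - (k:ℝ)) - (τ - (m:ℝ)))]
    have hp1 : (0:ℝ) < 1 + (τ - (k:ℝ)) ^ 2 := by positivity
    have hp2 : (0:ℝ) < 1 + ((k:ℝ) - (m:ℝ)) ^ 2 := by positivity
    rw [show (4:ℝ) * ((1:ℝ) + ((k:ℝ) - (m:ℝ)) ^ 2)⁻¹ = ((1 + ((k:ℝ) - (m:ℝ)) ^ 2) / 4)⁻¹ by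
      field_simp]
    apply inv_anti₀ (by positivity)
    linarith
  have hsum : Summable (fun k : ℤ => ((1:ℝ) + (τ - (k:ℝ)) ^ 2)⁻¹) :=
    Summable.of_nonneg_of_le (fun k => by positivity) hkey (hshift.mul_left 4)
  refine ⟨hsum, ?_⟩
  calc (∑' k : ℤ, ((1:ℝ) + (τ - (k:ℝ)) ^ 2)⁻¹)
      ≤ ∑' k : ℤ, 4 * ((1:ℝ) + ((k:ℝ) - (m:ℝ)) ^ 2)⁻¹ :=
        Summable.tsum_le_tsum hkey hsum (hshift.mul_left 4)
    _ = 4 * ∑' k : ℤ, ((1:ℝ) + ((k:ℝ) - (m:ℝ)) ^ 2)⁻¹ := tsum_mul_left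
    _ = 4 * Z := by
        congr 1
        rw [hZ, ← (Equiv.subRight m).tsum_eq (fun n : ℤ => ((1:ℝ) + (n:ℝ) ^ 2)⁻¹)]
        apply tsum_congr
        intro k
        simp [Equiv.subRight]

lemma tsum_cauchy_schwarz (f g : ℤ → ℝ) (hf : ∀ n, 0 ≤ f n) (hg : ∀ n, 0 ≤ g n)
    (hf2 : Summable (fun n => f n ^ 2)) (hg2 : Summable (fun n => g n ^ 2)) :
    Summable (fun n => f n * g n) ∧
    (∑' n, f n * g n) ^ 2 ≤ (∑' n, f n ^ 2) * (∑' n, g n ^ 2) := by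
  have hsum : Summable (fun n => f n * g n) := by
    apply Summable.of_nonneg_of_le (fun n => mul_nonneg (hf n) (hg n))
      (fun n => ?_) ((hf2.add hg2).div_const 2)
    have h := sq_nonneg (f n - g n)
    show f n * g n ≤ (f n ^ 2 + g n ^ 2) / 2
    nlinarith
  refine ⟨hsum, ?_⟩
  set A := ∑' n, f n ^ 2 with hA
  set B := ∑' n, g n ^ 2 with hB
  have hAnn : 0 ≤ A := tsum_nonneg fun n => sq_nonneg _
  have hBnn : 0 ≤ B := tsum_nonneg fun n => sq_nonneg _
  have hle : (∑' n, f n * g n) ≤ Real.sqrt (A * B) := by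
    apply Summable.tsum_le_of_sum_le hsum
    intro s
    have hs0 : 0 ≤ ∑ i ∈ s, f i * g i :=
      Finset.sum_nonneg fun i _ => mul_nonneg (hf i) (hg i)
    rw [Real.le_sqrt hs0 (mul_nonneg hAnn hBnn)]
    calc (∑ i ∈ s, f i * g i) ^ 2
        ≤ (∑ i ∈ s, f i ^ 2) * ∑ i ∈ s, g i ^ 2 := Finset.sum_mul_sq_le_sq_mul_sq s f g
      _ ≤ A * B := by
          apply mul_le_mul (Summable.sum_le_tsum s (fun n _ => sq_nonneg _) hf2)
            (Summable.sum_le_tsum s (fun n _ => sq_nonneg _) hg2)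
            (Finset.sum_nonneg fun i _ => sq_nonneg _) hAnn
  calc (∑' n, f n * g n) ^ 2 ≤ Real.sqrt (A * B) ^ 2 := by
        apply pow_le_pow_left₀ (tsum_nonneg fun n => mul_nonneg (hf n) (hg n)) hle
    _ = A * B := Real.sq_sqrt (mul_nonneg hAnn hBnn)

lemma qsum_bound (K Cw : ℝ) (hK : 0 ≤ K) (p : ℤ) (τ : ℝ)
    (hv : Summable (fun k : ℤ => ((1:ℝ) + (τ - (k:ℝ)) ^ 2)⁻¹))
    (hvb : (∑' k : ℤ, ((1:ℝ) + (τ - (k:ℝ)) ^ 2)⁻¹) ≤ Cw)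
    (F : ℤ → ℝ) (hFnn : ∀ n, 0 ≤ F n)
    (hFle : ∀ n : ℤ, F n ≤ K * ((1:ℝ) + (τ - ((n ^ 2 + (n + p) ^ 2 : ℤ) : ℝ)) ^ 2)⁻¹)
    (hFsum : Summable F) :
    (∑' n, F n) ≤ 2 * K * Cw := by
  set A : Set ℤ := {n | 0 ≤ 2 * n + p} with hA
  have hKv : Summable (fun k : ℤ => K * ((1:ℝ) + (τ - (k:ℝ)) ^ 2)⁻¹) := hv.mul_left K
  have htsum_v : (∑' k : ℤ, K * ((1:ℝ) + (τ - (k:ℝ)) ^ 2)⁻¹) ≤ K * Cw := by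
    rw [tsum_mul_left]
    exact mul_le_mul_of_nonneg_left hvb hK
  have hb1 : (∑' n : A, F n) ≤ K * Cw := by
    have hinj : Function.Injective (fun n : A => (n.1 ^ 2 + (n.1 + p) ^ 2 : ℤ)) := by
      rintro ⟨a, ha⟩ ⟨b, hb⟩ hab
      simp only [Set.mem_setOf_eq, hA] at ha hb
      simp only at hab
      simp only [Subtype.mk.injEq]
      have h2 : (a - b) * (a + b + p) * 2 = 0 := by linear_combination hab
      rcases mul_eq_zero.1 h2 with h | h
      · rcases mul_eq_zero.1 h with h' | h' <;> omega
      · omega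
    refine le_trans (Summable.tsum_le_tsum_of_inj (fun n : A => (n.1 ^ 2 + (n.1 + p) ^ 2 : ℤ)) hinj
      (fun c _ => mul_nonneg hK (by positivity)) (fun n => hFle n.1)
      (hFsum.subtype A) hKv) htsum_v
  have hb2 : (∑' n : ↥(Aᶜ), F n) ≤ K * Cw := by
    have hinj : Function.Injective (fun n : ↥(Aᶜ) => (n.1 ^ 2 + (n.1 + p) ^ 2 : ℤ)) := by
      rintro ⟨a, ha⟩ ⟨b, hb⟩ hab
      simp only [Set.mem_compl_iff, Set.mem_setOf_eq, hA, not_le] at ha hb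
      simp only at hab
      simp only [Subtype.mk.injEq]
      have h2 : (a - b) * (a + b + p) * 2 = 0 := by linear_combination hab
      rcases mul_eq_zero.1 h2 with h | h
      · rcases mul_eq_zero.1 h with h' | h' <;> omega
      · omega
    refine le_trans (Summable.tsum_le_tsum_of_inj (fun n : ↥(Aᶜ) => (n.1 ^ 2 + (n.1 + p) ^ 2 : ℤ)) hinj
      (fun c _ => mul_nonneg hK (by positivity)) (fun n => hFle n.1)
      (hFsum.subtype Aᶜ) hKv) htsum_v
  calc (∑' n, F n) = (∑' n : A, F n) + (∑' n : ↥(Aᶜ), F n) :=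
        (Summable.tsum_add_tsum_compl (hFsum.subtype A) (hFsum.subtype Aᶜ)).symm
    _ ≤ K * Cw + K * Cw := add_le_add hb1 hb2
    _ = 2 * K * Cw := by ring

lemma jb_sq_rpow (x d : ℝ) : (jb x ^ d) ^ (2:ℕ) = (1 + x ^ 2) ^ d := by
  unfold jb
  rw [← Real.rpow_natCast (Real.sqrt (1 + x ^ 2) ^ d) 2,
    ← Real.rpow_mul (Real.sqrt_nonneg _), Real.sqrt_eq_rpow,
    ← Real.rpow_mul (by positivity)]
  norm_num
  congr 1
  ring

lemma one_add_sq_mul (x y : ℝ) : 1 + (x + y) ^ 2 ≤ 2 * (1 + y ^ 2) * (1 + x ^ 2) := by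
  nlinarith [sq_nonneg (x - y), sq_nonneg (x * y)]

lemma key_ineq (n τ b : ℝ) (hn : (0:ℝ) ≤ n ^ 2) (hb : n ^ 2 ≤ b) :
    (1 + n ^ 2) ^ 2 ≤ 4 * (1 + τ ^ 2) * (1 + (τ - b) ^ 2) := by
  have h0 : n ^ 2 * n ^ 2 ≤ b * b := mul_le_mul hb hb hn (le_trans hn hb)
  have h1 : b ^ 2 ≤ 2 * τ ^ 2 + 2 * (τ - b) ^ 2 := by nlinarith [sq_nonneg (2 * τ - b)]
  have h2 : (1 + n ^ 2) ^ 2 ≤ 2 * (1 + b ^ 2) := by nlinarith [sq_nonneg (b - 1)]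
  nlinarith [sq_nonneg (τ * (τ - b)), sq_nonneg (τ - b)]

lemma sq_term_summable (ψ : SchwartzMap ℝ ℂ) (α : ℤ → ℂ) (C₀ d : ℝ) (hC₀ : 0 < C₀)
    (hd : 0 ≤ d) (hα : ∀ n : ℤ, ‖α n‖ ≤ C₀ * jb (n : ℝ) ^ d) (p : ℤ) (τ : ℝ) :
    Summable (fun n : ℤ => ‖α n‖ ^ 2 * ‖α (-n - p)‖ ^ 2 *
      ‖ft (⇑ψ) (τ - (n : ℝ) ^ 2 - ((n : ℝ) + (p : ℝ)) ^ 2)‖) := by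
  set k : ℕ := ⌈d⌉₊ + 1 with hk
  obtain ⟨K', hK'pos, hK'⟩ := ft_decay ψ k
  set E : ℝ := K' * (4 * (1 + τ ^ 2)) ^ k with hE
  have hEnn : 0 ≤ E := mul_nonneg hK'pos.le (by positivity)
  set D : ℝ := C₀ ^ 2 * (C₀ ^ 2 * (2 * (1 + (p:ℝ) ^ 2)) ^ d) * E with hD
  have hDnn : 0 ≤ D := mul_nonneg (by positivity) hEnn
  apply Summable.of_nonneg_of_le (fun n => by positivity) (fun n => ?_)
    (summable_base.mul_left D)
  set u : ℝ := 1 + (n:ℝ) ^ 2 with hu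
  have hu1 : (1:ℝ) ≤ u := by nlinarith [sq_nonneg ((n:ℝ))]
  have hu0 : (0:ℝ) < u := by positivity
  -- bound 1
  have b1 : ‖α n‖ ^ 2 ≤ C₀ ^ 2 * u ^ d := by
    calc ‖α n‖ ^ 2 ≤ (C₀ * jb (n:ℝ) ^ d) ^ 2 :=
          pow_le_pow_left₀ (norm_nonneg _) (hα n) 2
      _ = C₀ ^ 2 * (jb (n:ℝ) ^ d) ^ (2:ℕ) := by ring
      _ = C₀ ^ 2 * u ^ d := by rw [jb_sq_rpow]
  -- bound 2
  have b2 : ‖α (-n - p)‖ ^ 2 ≤ C₀ ^ 2 * (2 * (1 + (p:ℝ) ^ 2)) ^ d * u ^ d := by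
    have hcast : (1:ℝ) + ((-n - p : ℤ) : ℝ) ^ 2 = 1 + ((n:ℝ) + (p:ℝ)) ^ 2 := by
      push_cast; ring
    calc ‖α (-n - p)‖ ^ 2 ≤ (C₀ * jb ((-n - p : ℤ) : ℝ) ^ d) ^ 2 :=
          pow_le_pow_left₀ (norm_nonneg _) (hα (-n - p)) 2
      _ = C₀ ^ 2 * (jb ((-n - p : ℤ) : ℝ) ^ d) ^ (2:ℕ) := by ring
      _ = C₀ ^ 2 * (1 + ((n:ℝ) + (p:ℝ)) ^ 2) ^ d := by rw [jb_sq_rpow, hcast]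
      _ ≤ C₀ ^ 2 * ((2 * (1 + (p:ℝ) ^ 2)) * u) ^ d := by
          apply mul_le_mul_of_nonneg_left _ (by positivity)
          exact Real.rpow_le_rpow (by positivity) (one_add_sq_mul (n:ℝ) (p:ℝ)) hd
      _ = C₀ ^ 2 * (2 * (1 + (p:ℝ) ^ 2)) ^ d * u ^ d := by
          rw [Real.mul_rpow (by positivity) hu0.le, mul_assoc]
  -- bound 3
  have b3 : ‖ft (⇑ψ) (τ - (n : ℝ) ^ 2 - ((n : ℝ) + (p : ℝ)) ^ 2)‖ ≤ E * (u ^ (2 * k))⁻¹ := by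
    set b : ℤ := n ^ 2 + (n + p) ^ 2 with hb
    have harg : τ - (n : ℝ) ^ 2 - ((n : ℝ) + (p : ℝ)) ^ 2 = τ - (b : ℝ) := by
      rw [hb]; push_cast; ring
    have hbge : (n:ℝ) ^ 2 ≤ (b:ℝ) := by
      have : (n:ℤ) ^ 2 ≤ b := by nlinarith [sq_nonneg (n + p)]
      exact_mod_cast this
    have key := key_ineq (n:ℝ) τ (b:ℝ) (sq_nonneg _) hbge
    have hpow : u ^ (2 * k) ≤ (4 * (1 + τ ^ 2)) ^ k * (1 + (τ - (b:ℝ)) ^ 2) ^ k := by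
      calc u ^ (2 * k) = (u ^ 2) ^ k := by rw [← pow_mul]
        _ ≤ (4 * (1 + τ ^ 2) * (1 + (τ - (b:ℝ)) ^ 2)) ^ k :=
            pow_le_pow_left₀ (by positivity) key k
        _ = (4 * (1 + τ ^ 2)) ^ k * (1 + (τ - (b:ℝ)) ^ 2) ^ k := mul_pow _ _ _
    rw [harg]
    calc ‖ft (⇑ψ) (τ - (b:ℝ))‖ ≤ K' / (1 + (τ - (b:ℝ)) ^ 2) ^ k := hK' _
      _ ≤ K' * (4 * (1 + τ ^ 2)) ^ k / u ^ (2 * k) := by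
          rw [div_le_div_iff₀ (by positivity) (by positivity)]
          calc K' * u ^ (2 * k)
              ≤ K' * ((4 * (1 + τ ^ 2)) ^ k * (1 + (τ - (b:ℝ)) ^ 2) ^ k) :=
                mul_le_mul_of_nonneg_left hpow hK'pos.le
            _ = K' * (4 * (1 + τ ^ 2)) ^ k * (1 + (τ - (b:ℝ)) ^ 2) ^ k := by ring
      _ = E * (u ^ (2 * k))⁻¹ := by rw [hE, div_eq_mul_inv]
  -- combine
  calc ‖α n‖ ^ 2 * ‖α (-n - p)‖ ^ 2 * ‖ft (⇑ψ) (τ - (n : ℝ) ^ 2 - ((n : ℝ) + (p : ℝ)) ^ 2)‖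
      ≤ (C₀ ^ 2 * u ^ d) * (C₀ ^ 2 * (2 * (1 + (p:ℝ) ^ 2)) ^ d * u ^ d) *
          (E * (u ^ (2 * k))⁻¹) := by
        apply mul_le_mul (mul_le_mul b1 b2 (by positivity) (by positivity)) b3
          (norm_nonneg _) (by positivity)
    _ = D * (u ^ d * u ^ d * (u ^ (2 * k))⁻¹) := by rw [hD]; ring
    _ ≤ D * u⁻¹ := by
        apply mul_le_mul_of_nonneg_left _ hDnn
        have hcol : u ^ d * u ^ d * (u ^ (2 * k))⁻¹ = u ^ (d + d - ((2 * k : ℕ) : ℝ)) := by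
          rw [← Real.rpow_natCast u (2 * k), ← Real.rpow_neg hu0.le,
            ← Real.rpow_add hu0, ← Real.rpow_add hu0]
          congr 1
          try ring
        rw [hcol, ← Real.rpow_neg_one u]
        apply Real.rpow_le_rpow_of_exponent_le hu1
        have hdk : d ≤ (⌈d⌉₊ : ℝ) := Nat.le_ceil d
        have h2k : ((2 * k : ℕ) : ℝ) = 2 * (⌈d⌉₊ : ℝ) + 2 := by rw [hk]; push_cast; ring
        rw [h2k]
        linarith


/-- pointwise bound `|ĉ_p(τ)|² ≲ ∑_n |α_n|² |α_{-n-p}|² |ψ̂(τ-n²-(n+p)²)|`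
for sequences `α` of at most polynomial growth. -/
theorem stmt5 (ψ : SchwartzMap ℝ ℂ) :
    ∃ C : ℝ, 0 < C ∧ ∀ α : ℤ → ℂ,
      (∃ (C₀ : ℝ) (d : ℝ), 0 < C₀ ∧ 0 ≤ d ∧ ∀ n : ℤ, ‖α n‖ ≤ C₀ * jb (n : ℝ) ^ d) →
      ∀ (p : ℤ) (τ : ℝ),
        ‖∑' n : ℤ, (starRingEnd ℂ) (α n) * (starRingEnd ℂ) (α (-n - p)) *
            ft (⇑ψ) (τ - (n : ℝ) ^ 2 - ((n : ℝ) + (p : ℝ)) ^ 2)‖ ^ 2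
          ≤ C * ∑' n : ℤ, ‖α n‖ ^ 2 * ‖α (-n - p)‖ ^ 2 *
              ‖ft (⇑ψ) (τ - (n : ℝ) ^ 2 - ((n : ℝ) + (p : ℝ)) ^ 2)‖ := by
  obtain ⟨Cw, hCwpos, hCwb⟩ := translate_bound
  obtain ⟨K, hKpos, hKb⟩ := ft_decay ψ 1
  refine ⟨2 * K * Cw, by positivity, ?_⟩
  rintro α ⟨C₀, d, hC₀, hd, hα⟩ p τ
  obtain ⟨hv, hvb⟩ := hCwb τ
  set F : ℤ → ℝ := fun n => ‖ft (⇑ψ) (τ - (n:ℝ) ^ 2 - ((n:ℝ) + (p:ℝ)) ^ 2)‖ with hF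
  have hFnn : ∀ n, 0 ≤ F n := fun n => norm_nonneg _
  have hFle : ∀ n : ℤ, F n ≤ K * ((1:ℝ) + (τ - ((n ^ 2 + (n + p) ^ 2 : ℤ) : ℝ)) ^ 2)⁻¹ := by
    intro n
    have harg : τ - (n:ℝ) ^ 2 - ((n:ℝ) + (p:ℝ)) ^ 2 = τ - ((n ^ 2 + (n + p) ^ 2 : ℤ) : ℝ) := by
      push_cast; ring
    calc F n ≤ K / (1 + (τ - (n:ℝ) ^ 2 - ((n:ℝ) + (p:ℝ)) ^ 2) ^ 2) ^ 1 := hKb _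
      _ = K * ((1:ℝ) + (τ - ((n ^ 2 + (n + p) ^ 2 : ℤ) : ℝ)) ^ 2)⁻¹ := by
          rw [harg, pow_one, div_eq_mul_inv]
  have hFsum : Summable F := by
    have h1 := sq_term_summable ψ (fun _ => (1:ℂ)) 1 0 one_pos le_rfl
      (fun n => by simp [Real.rpow_zero]) p τ
    simpa using h1
  have hFtsum : (∑' n, F n) ≤ 2 * K * Cw :=
    qsum_bound K Cw hKpos.le p τ hv hvb F hFnn hFle hFsum
  set x : ℤ → ℝ := fun n => ‖α n‖ * ‖α (-n - p)‖ * Real.sqrt (F n) with hx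
  set y : ℤ → ℝ := fun n => Real.sqrt (F n) with hy
  have hxnn : ∀ n, 0 ≤ x n := fun n =>
    mul_nonneg (mul_nonneg (norm_nonneg _) (norm_nonneg _)) (Real.sqrt_nonneg _)
  have hynn : ∀ n, 0 ≤ y n := fun n => Real.sqrt_nonneg _
  have hx2eq : ∀ n, x n ^ 2 = ‖α n‖ ^ 2 * ‖α (-n - p)‖ ^ 2 * F n := by
    intro n
    rw [hx]
    simp only
    rw [mul_pow, mul_pow, Real.sq_sqrt (hFnn n)]
  have hy2eq : ∀ n, y n ^ 2 = F n := fun n => Real.sq_sqrt (hFnn n)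
  have hx2 : Summable (fun n => x n ^ 2) :=
    (sq_term_summable ψ α C₀ d hC₀ hd hα p τ).congr fun n => (hx2eq n).symm
  have hy2 : Summable (fun n => y n ^ 2) := hFsum.congr fun n => (hy2eq n).symm
  obtain ⟨hxysum, hcs⟩ := tsum_cauchy_schwarz x y hxnn hynn hx2 hy2
  have hterm : ∀ n : ℤ, ‖(starRingEnd ℂ) (α n) * (starRingEnd ℂ) (α (-n - p)) *
      ft (⇑ψ) (τ - (n : ℝ) ^ 2 - ((n : ℝ) + (p : ℝ)) ^ 2)‖ = x n * y n := by
    intro n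
    rw [norm_mul, norm_mul, RCLike.norm_conj, RCLike.norm_conj, hx, hy]
    simp only
    rw [mul_assoc, mul_assoc, Real.mul_self_sqrt (hFnn n)]
    simp only [hF]
    ring
  have hnormsum : Summable (fun n : ℤ => ‖(starRingEnd ℂ) (α n) * (starRingEnd ℂ) (α (-n - p)) *
      ft (⇑ψ) (τ - (n : ℝ) ^ 2 - ((n : ℝ) + (p : ℝ)) ^ 2)‖) :=
    hxysum.congr fun n => (hterm n).symm
  have hnorm : ‖∑' n : ℤ, (starRingEnd ℂ) (α n) * (starRingEnd ℂ) (α (-n - p)) *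
      ft (⇑ψ) (τ - (n : ℝ) ^ 2 - ((n : ℝ) + (p : ℝ)) ^ 2)‖ ≤ ∑' n, x n * y n := by
    calc ‖∑' n : ℤ, (starRingEnd ℂ) (α n) * (starRingEnd ℂ) (α (-n - p)) *
        ft (⇑ψ) (τ - (n : ℝ) ^ 2 - ((n : ℝ) + (p : ℝ)) ^ 2)‖
        ≤ ∑' n : ℤ, ‖(starRingEnd ℂ) (α n) * (starRingEnd ℂ) (α (-n - p)) *
          ft (⇑ψ) (τ - (n : ℝ) ^ 2 - ((n : ℝ) + (p : ℝ)) ^ 2)‖ :=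
          norm_tsum_le_tsum_norm hnormsum
      _ = ∑' n, x n * y n := tsum_congr hterm
  have hy2sum : (∑' n, y n ^ 2) ≤ 2 * K * Cw := by
    rw [tsum_congr hy2eq]
    exact hFtsum
  have hx2nn : 0 ≤ ∑' n, x n ^ 2 := tsum_nonneg fun n => sq_nonneg _
  calc ‖∑' n : ℤ, (starRingEnd ℂ) (α n) * (starRingEnd ℂ) (α (-n - p)) *
      ft (⇑ψ) (τ - (n : ℝ) ^ 2 - ((n : ℝ) + (p : ℝ)) ^ 2)‖ ^ 2
      ≤ (∑' n, x n * y n) ^ 2 := pow_le_pow_left₀ (norm_nonneg _) hnorm 2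
    _ ≤ (∑' n, x n ^ 2) * (∑' n, y n ^ 2) := hcs
    _ ≤ (∑' n, x n ^ 2) * (2 * K * Cw) := mul_le_mul_of_nonneg_left hy2sum hx2nn
    _ = 2 * K * Cw * ∑' n, x n ^ 2 := by ring
    _ = 2 * K * Cw * ∑' n : ℤ, ‖α n‖ ^ 2 * ‖α (-n - p)‖ ^ 2 *
        ‖ft (⇑ψ) (τ - (n : ℝ) ^ 2 - ((n : ℝ) + (p : ℝ)) ^ 2)‖ := by
        rw [tsum_congr hx2eq]
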